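/- Let n ≥ 1, let k_1, …, k_n be pairwise distinct strictly positive real numbers, and let y_0 > max_i k_i. Then the function h(x) := (∏_{i=1}^n k_i) / (x · ∏_{i=1}^n (x − k_i)) is integrable on (y_0, ∞), and ∫_{y_0}^{∞} h(x) dx = −∑_{i=1}^n [(∏_{j≠i} k_j) / (∏_{j≠i} (k_i − k_j))] · ln(1 − k_i/y_0). -/

import Mathlib

open Finset MeasureTheory

-- Lagrange interpolation of the constant 1 at the nodes k i.
lemma lagrange_key {n : ℕ} (hn : 1 ≤ n) (k : Fin n → ℝ) (hinj : Function.Injective k)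
    (x : ℝ) :
    ∑ i, (∏ j ∈ Finset.univ.erase i, (x - k j)) / (∏ j ∈ Finset.univ.erase i, (k i - k j)) = 1 := by
  have hne : (Finset.univ : Finset (Fin n)).Nonempty := by
    refine Finset.univ_nonempty_iff.mpr ?_
    exact Fin.pos_iff_nonempty.mp hn
  have h := Lagrange.sum_basis (s := Finset.univ) (v := k) hinj.injOn hne
  have h2 := congrArg (Polynomial.eval x) h
  rw [Polynomial.eval_finset_sum, Polynomial.eval_one] at h2
  rw [← h2]
  refine Finset.sum_congr rfl fun i _ => ?_
  rw [Lagrange.basis, Polynomial.eval_prod]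
  rw [← Finset.prod_div_distrib]
  refine Finset.prod_congr rfl fun j _ => ?_
  simp [Lagrange.basisDivisor, div_eq_inv_mul]

theorem integral_pos_tail (n : ℕ) (hn : 1 ≤ n) (k : Fin n → ℝ) (hk : ∀ i, 0 < k i)
    (hinj : Function.Injective k) (y₀ : ℝ) (hy₀ : ∀ i, k i < y₀) :
    IntegrableOn (fun x : ℝ => (∏ i, k i) / (x * ∏ i, (x - k i))) (Set.Ioi y₀) ∧
    ∫ x in Set.Ioi y₀, (∏ i, k i) / (x * ∏ i, (x - k i)) =
      -∑ i, ((∏ j ∈ Finset.univ.erase i, k j) / (∏ j ∈ Finset.univ.erase i, (k i - k j))) *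
        Real.log (1 - k i / y₀) := by
  obtain ⟨i₀⟩ : Nonempty (Fin n) := Fin.pos_iff_nonempty.mp hn
  have hy₀pos : 0 < y₀ := (hk i₀).trans (hy₀ i₀)
  set B : Fin n → ℝ := fun i =>
    (∏ j ∈ Finset.univ.erase i, k j) / (∏ j ∈ Finset.univ.erase i, (k i - k j)) with hB
  set F : ℝ → ℝ := fun x => ∑ i, B i * Real.log (1 - k i / x) with hF
  -- derivative computation
  have hderiv : ∀ x ∈ Set.Ici y₀, HasDerivAt F ((∏ i, k i) / (x * ∏ i, (x - k i))) x := by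
    intro x hx
    have hxk : ∀ i, k i < x := fun i => lt_of_lt_of_le (hy₀ i) hx
    have hxpos : 0 < x := (hk i₀).trans (hxk i₀)
    have hterm : ∀ i : Fin n, HasDerivAt (fun y => B i * Real.log (1 - k i / y))
        (B i * (k i / (x * (x - k i)))) x := by
      intro i
      have h1 : HasDerivAt (fun y : ℝ => 1 - k i / y) (k i / x ^ 2) x := by
        have h := ((hasDerivAt_inv (ne_of_gt hxpos)).const_mul (k i)).const_sub 1
        have heq : (fun y : ℝ => 1 - k i * y⁻¹) = fun y : ℝ => 1 - k i / y := by
          funext y; rw [div_eq_mul_inv]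
        rw [heq] at h
        refine h.congr_deriv ?_
        ring
      have hpos : 0 < 1 - k i / x := by
        rw [sub_pos, div_lt_one hxpos]; exact hxk i
      have h2 := (h1.log (ne_of_gt hpos)).const_mul (B i)
      refine h2.congr_deriv ?_
      have hxk' : x - k i ≠ 0 := ne_of_gt (sub_pos.mpr (hxk i))
      have hx0 : x ≠ 0 := ne_of_gt hxpos
      field_simp
    have hsum : HasDerivAt F (∑ i, B i * (k i / (x * (x - k i)))) x := by
      exact HasDerivAt.fun_sum fun i _ => hterm i
    convert hsum using 1
    -- rational identity via Lagrange
    have key := lagrange_key hn k hinj x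
    have hC : ∀ i : Fin n, B i * (k i / (x * (x - k i))) =
        ((∏ i, k i) / (x * ∏ i, (x - k i))) *
          ((∏ j ∈ Finset.univ.erase i, (x - k j)) / (∏ j ∈ Finset.univ.erase i, (k i - k j))) := by
      intro i
      have hxpos' : x ≠ 0 := ne_of_gt hxpos
      have hxk' : ∀ j, x - k j ≠ 0 := fun j => ne_of_gt (sub_pos.mpr (hxk j))
      have hkd : ∀ j ∈ Finset.univ.erase i, k i - k j ≠ 0 := by
        intro j hj
        have : j ≠ i := Finset.ne_of_mem_erase hj
        exact sub_ne_zero.mpr fun h => this (hinj h.symm)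
      have hprodk : (∏ i, k i) = k i * ∏ j ∈ Finset.univ.erase i, k j := by
        rw [Finset.mul_prod_erase _ _ (Finset.mem_univ i)]
      have hprodx : (∏ j, (x - k j)) = (x - k i) * ∏ j ∈ Finset.univ.erase i, (x - k j) :=
        (Finset.mul_prod_erase Finset.univ (fun j => x - k j) (Finset.mem_univ i)).symm
      have hpe : (∏ j ∈ Finset.univ.erase i, (x - k j)) ≠ 0 :=
        Finset.prod_ne_zero_iff.mpr fun j _ => hxk' j
      have hpd : (∏ j ∈ Finset.univ.erase i, (k i - k j)) ≠ 0 :=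
        Finset.prod_ne_zero_iff.mpr hkd
      simp only [hB, hprodk, hprodx]
      rw [div_mul_div_comm, div_mul_div_comm]
      have hd1 : (∏ j ∈ Finset.univ.erase i, (k i - k j)) * (x * (x - k i)) ≠ 0 :=
        mul_ne_zero hpd (mul_ne_zero hxpos' (hxk' i))
      have hd2 : x * ((x - k i) * ∏ j ∈ Finset.univ.erase i, (x - k j)) *
          ∏ j ∈ Finset.univ.erase i, (k i - k j) ≠ 0 :=
        mul_ne_zero (mul_ne_zero hxpos' (mul_ne_zero (hxk' i) hpe)) hpd
      rw [div_eq_div_iff hd1 hd2]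
      ring
    calc (∏ i, k i) / (x * ∏ i, (x - k i))
        = ((∏ i, k i) / (x * ∏ i, (x - k i))) * 1 := by ring
      _ = ((∏ i, k i) / (x * ∏ i, (x - k i))) *
          (∑ i, (∏ j ∈ Finset.univ.erase i, (x - k j)) /
            (∏ j ∈ Finset.univ.erase i, (k i - k j))) := by rw [key]
      _ = ∑ i, B i * (k i / (x * (x - k i))) := by
          rw [Finset.mul_sum]
          exact Finset.sum_congr rfl fun i _ => (hC i).symm
  -- positivity of integrand
  have hpos : ∀ x ∈ Set.Ioi y₀, 0 ≤ (∏ i, k i) / (x * ∏ i, (x - k i)) := by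
    intro x hx
    have hxk : ∀ i, k i < x := fun i => (hy₀ i).trans hx
    have hxpos : 0 < x := (hk i₀).trans (hxk i₀)
    apply div_nonneg
    · exact le_of_lt (Finset.prod_pos fun i _ => hk i)
    · exact le_of_lt (mul_pos hxpos (Finset.prod_pos fun i _ => sub_pos.mpr (hxk i)))
  -- limit of F at infinity
  have hlim : Filter.Tendsto F Filter.atTop (nhds 0) := by
    have hterm : ∀ i : Fin n, Filter.Tendsto (fun x => B i * Real.log (1 - k i / x))
        Filter.atTop (nhds 0) := by
      intro i
      have h1 : Filter.Tendsto (fun x : ℝ => 1 - k i / x) Filter.atTop (nhds 1) := by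
        have := Filter.Tendsto.const_sub (b := (1 : ℝ))
          (Filter.Tendsto.div_atTop (tendsto_const_nhds (x := k i)) Filter.tendsto_id)
        simpa using this
      have h2 := h1.log one_ne_zero
      simpa using h2.const_mul (B i)
    have := tendsto_finset_sum (Finset.univ : Finset (Fin n))
      (fun i _ => hterm i)
    simpa [hF] using this
  have hderiv' : ∀ x ∈ Set.Ioi y₀, HasDerivAt F ((∏ i, k i) / (x * ∏ i, (x - k i))) x :=
    fun x hx => hderiv x (Set.mem_Ici.mpr (le_of_lt hx))
  have hcont : ContinuousWithinAt F (Set.Ici y₀) y₀ :=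
    (hderiv y₀ (Set.mem_Ici.mpr le_rfl)).continuousAt.continuousWithinAt
  constructor
  · exact integrableOn_Ioi_deriv_of_nonneg hcont hderiv' hpos hlim
  · rw [integral_Ioi_of_hasDerivAt_of_nonneg hcont hderiv' hpos hlim]
    simp [hF, hB]
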